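/- Let X be a metric space of bounded geometry and 𝔘 a cover of X with finite multiplicity m(𝔘), finite mesh S(𝔘), and positive Lebesgue number L(𝔘). Then for every 1 ≤ p < ∞ there exists a map ξ : X → ℓ^p(X) with ‖ξ_x‖_p = 1 for all x, with propagation S(ξ) ≤ S(𝔘), and which is 2(2 m(𝔘)²)^{1/p} / L(𝔘)-Lipschitz. -/

import Mathlib

open Real Finset

namespace Stmt11

variable {X : Type*} [MetricSpace X] {L : ℝ} {U : Set X} {x y : X}

/-- Truncated distance to the complement. -/
noncomputable def psi (L : ℝ) (U : Set X) (x : X) : ℝ :=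
  (EMetric.infEdist x Uᶜ ⊓ ENNReal.ofReal L).toReal

lemma psi_nonneg (L : ℝ) (U : Set X) (x : X) : 0 ≤ psi L U x := ENNReal.toReal_nonneg

lemma psi_ne_top (L : ℝ) (U : Set X) (x : X) :
    EMetric.infEdist x Uᶜ ⊓ ENNReal.ofReal L ≠ ⊤ :=
  ne_top_of_le_ne_top ENNReal.ofReal_ne_top inf_le_right

lemma psi_le (hL : 0 ≤ L) : psi L U x ≤ L := by
  calc psi L U x ≤ (ENNReal.ofReal L).toReal :=
        ENNReal.toReal_mono ENNReal.ofReal_ne_top inf_le_right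
    _ = L := ENNReal.toReal_ofReal hL

lemma psi_eq_zero_of_not_mem (hx : x ∉ U) : psi L U x = 0 := by
  have : EMetric.infEdist x Uᶜ = 0 := EMetric.infEdist_zero_of_mem hx
  simp [psi, this]

lemma psi_eq_of_ball (hL : 0 < L) (h : Metric.ball x L ⊆ U) : psi L U x = L := by
  have h1 : ENNReal.ofReal L ≤ EMetric.infEdist x Uᶜ := by
    refine Metric.le_infEDist.2 ?_
    intro z hz
    have hz' : z ∉ Metric.ball x L := fun hmem => hz (h hmem)
    rw [Metric.mem_ball'] at hz'
    push_neg at hz'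
    rw [edist_dist]
    exact ENNReal.ofReal_le_ofReal hz'
  rw [psi, inf_eq_right.2 h1, ENNReal.toReal_ofReal hL.le]

lemma psi_lip_one_side (L : ℝ) (U : Set X) (x y : X) :
    psi L U x ≤ psi L U y + dist x y := by
  have h1 : EMetric.infEdist x Uᶜ ⊓ ENNReal.ofReal L ≤
      (EMetric.infEdist y Uᶜ ⊓ ENNReal.ofReal L) + edist x y := by
    calc EMetric.infEdist x Uᶜ ⊓ ENNReal.ofReal L
        ≤ (EMetric.infEdist y Uᶜ + edist x y) ⊓ (ENNReal.ofReal L + edist x y) :=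
          inf_le_inf EMetric.infEdist_le_infEdist_add_edist
            (le_add_of_nonneg_right zero_le)
      _ = (EMetric.infEdist y Uᶜ ⊓ ENNReal.ofReal L) + edist x y := by
          rw [min_add_add_right]
  calc psi L U x ≤ ((EMetric.infEdist y Uᶜ ⊓ ENNReal.ofReal L) + edist x y).toReal :=
        ENNReal.toReal_mono (by
          exact ENNReal.add_ne_top.2 ⟨psi_ne_top L U y, edist_ne_top x y⟩) h1
    _ = psi L U y + dist x y := by
        rw [ENNReal.toReal_add (psi_ne_top L U y) (edist_ne_top x y)]
        rw [dist_edist]; rfl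

lemma psi_lipschitz (L : ℝ) (U : Set X) (x y : X) :
    |psi L U x - psi L U y| ≤ dist x y := by
  rw [abs_sub_le_iff]
  constructor
  · linarith [psi_lip_one_side L U x y]
  · have := psi_lip_one_side L U y x
    rw [dist_comm] at this; linarith

lemma psi_pos (hbg : ∀ R : ℝ, ∃ C : ℕ, ∀ x : X, (Metric.closedBall x R).encard ≤ C)
    (hL : 0 < L) (hx : x ∈ U) : 0 < psi L U x := by
  classical
  -- x is isolated
  obtain ⟨C, hC⟩ := hbg 1
  have hfin : (Metric.closedBall x 1).Finite := Set.finite_of_encard_le_coe (hC x)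
  set F : Finset X := hfin.toFinset.erase x with hF
  have hsep : ∃ ε > 0, ∀ z : X, z ≠ x → ε ≤ dist x z := by
    rcases F.eq_empty_or_nonempty with hFe | hFne
    · refine ⟨1, one_pos, fun z hz => ?_⟩
      by_contra hlt
      push_neg at hlt
      have : z ∈ F := by
        rw [hF, Finset.mem_erase]
        refine ⟨hz, hfin.mem_toFinset.2 ?_⟩
        rw [Metric.mem_closedBall, dist_comm]
        exact hlt.le
      simp [hFe] at this
    · refine ⟨min 1 (F.inf' hFne (fun z => dist x z)), lt_min one_pos ?_, fun z hz => ?_⟩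
      · rw [Finset.lt_inf'_iff]
        intro z hzF
        have : z ≠ x := (Finset.mem_erase.1 hzF).1
        exact dist_pos.2 (Ne.symm this)
      · rcases le_or_gt (dist x z) 1 with hle | hgt
        · have hzF : z ∈ F := by
            rw [hF, Finset.mem_erase]
            exact ⟨hz, hfin.mem_toFinset.2 (by rw [Metric.mem_closedBall, dist_comm]; exact hle)⟩
          exact le_trans (min_le_right _ _) (Finset.inf'_le _ hzF)
        · exact le_trans (min_le_left _ _) hgt.le
  obtain ⟨ε, hε, hsep⟩ := hsep
  have h1 : ENNReal.ofReal (min ε L) ≤ EMetric.infEdist x Uᶜ ⊓ ENNReal.ofReal L := by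
    refine le_inf ?_ (ENNReal.ofReal_le_ofReal (min_le_right _ _))
    refine Metric.le_infEDist.2 ?_
    intro z hz
    have hzx : z ≠ x := fun h => hz (h ▸ hx)
    rw [edist_dist]
    exact ENNReal.ofReal_le_ofReal (le_trans (min_le_left _ _) (hsep z hzx))
  have hpos : (0:ENNReal) < ENNReal.ofReal (min ε L) := by
    rw [ENNReal.ofReal_pos]; exact lt_min hε hL
  exact ENNReal.toReal_pos (ne_of_gt (lt_of_lt_of_le hpos h1)) (psi_ne_top L U x)

/-- Reverse Minkowski for finite `ℓ^p` norms. -/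
lemma abs_Lp_sub_le {ι : Type*} (s : Finset ι) (f g : ι → ℝ) {p : ℝ} (hp : 1 ≤ p) :
    |(∑ i ∈ s, |f i| ^ p) ^ (1/p) - (∑ i ∈ s, |g i| ^ p) ^ (1/p)|
      ≤ (∑ i ∈ s, |f i - g i| ^ p) ^ (1/p) := by
  rw [abs_sub_le_iff]
  constructor
  · have h := Real.Lp_add_le s (fun i => f i - g i) g hp
    simp only [sub_add_cancel] at h
    linarith
  · have h := Real.Lp_add_le s (fun i => g i - f i) f hp
    simp only [sub_add_cancel] at h
    have : ∀ i ∈ s, |g i - f i| ^ p = |f i - g i| ^ p := fun i _ => by rw [abs_sub_comm]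
    rw [Finset.sum_congr rfl this] at h
    linarith

end Stmt11


/-- The ℓ^p norm of a function on `X`. -/
noncomputable def pNorm {X : Type*} (p : ℝ) (f : X → ℝ) : ℝ := (∑' z, |f z| ^ p) ^ (1/p)

open Stmt11 Real Finset in
/-- a cover with finite multiplicity `m`, mesh at most `S` and Lebesgue
number at least `L > 0` yields a unit-norm kernel of propagation at most `S` which is
`2(2m²)^{1/p}/L`-Lipschitz into `ℓ^p(X)`. -/
theorem stmt11 {X : Type*} [MetricSpace X]
    (hbg : ∀ R : ℝ, ∃ C : ℕ, ∀ x : X, (Metric.closedBall x R).encard ≤ C)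
    (𝔘 : Set (Set X)) (hcover : ⋃₀ 𝔘 = Set.univ)
    (m : ℕ) (hm : ∀ x : X, {U ∈ 𝔘 | x ∈ U}.encard ≤ m)
    (S : ℝ) (hmesh : ∀ U ∈ 𝔘, ∀ a ∈ U, ∀ b ∈ U, dist a b ≤ S)
    (L : ℝ) (hL : 0 < L)
    (hleb : ∀ x : X, ∃ U ∈ 𝔘, Metric.ball x L ⊆ U)
    (p : ℝ) (hp : 1 ≤ p) :
    ∃ ξ : X → X → ℝ,
      (∀ x, pNorm p (ξ x) = 1) ∧
      (∀ x z : X, ξ x z ≠ 0 → dist x z ≤ S) ∧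
      (∀ x y : X, pNorm p (fun z => ξ x z - ξ y z)
        ≤ (2 * (2 * (m : ℝ) ^ 2) ^ (1/p) / L) * dist x y) := by
  classical
  have hp0 : (0:ℝ) < p := lt_of_lt_of_le one_pos hp
  have hp0' : p ≠ 0 := ne_of_gt hp0
  have h1p : (0:ℝ) < 1/p := by positivity
  have hcancel : ∀ s : ℝ, 0 ≤ s → (s ^ (1/p)) ^ p = s := by
    intro s hs
    rw [← Real.rpow_mul hs, one_div, inv_mul_cancel₀ hp0', Real.rpow_one]
  -- members of the cover are finite
  have hUfin : ∀ U ∈ 𝔘, U.Finite := by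
    intro U hU
    rcases Set.eq_empty_or_nonempty U with h | ⟨a, ha⟩
    · simp [h]
    · obtain ⟨C, hC⟩ := hbg S
      refine (Set.finite_of_encard_le_coe (hC a)).subset (fun b hb => ?_)
      rw [Metric.mem_closedBall, dist_comm]
      exact hmesh U hU a ha b hb
  set ψ : Set X → X → ℝ := psi L with hψdef
  have hψ0 : ∀ U x, 0 ≤ ψ U x := fun U x => psi_nonneg L U x
  have hψL : ∀ U x, ψ U x ≤ L := fun U x => psi_le hL.le
  have hψzero : ∀ U (x : X), x ∉ U → ψ U x = 0 := fun U x h => psi_eq_zero_of_not_mem h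
  have hψmem : ∀ U (x : X), ψ U x ≠ 0 → x ∈ U := by
    intro U x h
    by_contra hx
    exact h (hψzero U x hx)
  have hψpos : ∀ U (x : X), x ∈ U → 0 < ψ U x := fun U x h => psi_pos hbg hL h
  have hψlip : ∀ U (x y : X), |ψ U x - ψ U y| ≤ dist x y := fun U x y => psi_lipschitz L U x y
  -- the finite family of members containing x
  have hΦfin : ∀ x : X, {U ∈ 𝔘 | x ∈ U}.Finite := fun x => Set.finite_of_encard_le_coe (hm x)
  set Φ : X → Finset (Set X) := fun x => (hΦfin x).toFinset with hΦdef
  have hΦmem : ∀ (x : X) (U : Set X), U ∈ Φ x ↔ U ∈ 𝔘 ∧ x ∈ U := by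
    intro x U
    simp [hΦdef, Set.Finite.mem_toFinset]
  have hΦcard : ∀ x, (Φ x).card ≤ m := by
    intro x
    have h := hm x
    rw [(hΦfin x).encard_eq_coe_toFinset_card] at h
    exact_mod_cast h
  -- the normalization for x
  set N : X → ℝ := fun x => ∑ U ∈ Φ x, ψ U x ^ p with hNdef
  have hNext : ∀ (x : X) (G : Finset (Set X)), Φ x ⊆ G → (∀ U ∈ G, U ∈ 𝔘) →
      ∑ U ∈ G, ψ U x ^ p = N x := by
    intro x G hsub hG
    rw [hNdef]
    refine (Finset.sum_subset hsub (fun U hUG hUΦ => ?_)).symm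
    have hx : x ∉ U := fun hxU => hUΦ ((hΦmem x U).2 ⟨hG U hUG, hxU⟩)
    rw [hψzero U x hx, Real.zero_rpow hp0']
  have hNlb : ∀ x, L ^ p ≤ N x := by
    intro x
    obtain ⟨U, hU, hball⟩ := hleb x
    have hUΦ : U ∈ Φ x := (hΦmem x U).2 ⟨hU, hball (Metric.mem_ball_self hL)⟩
    have hψU : ψ U x = L := psi_eq_of_ball hL hball
    calc L ^ p = ψ U x ^ p := by rw [hψU]
      _ ≤ N x := Finset.single_le_sum (fun V _ => Real.rpow_nonneg (hψ0 V x) p) hUΦ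
  have hN0 : ∀ x, 0 < N x := fun x => lt_of_lt_of_le (Real.rpow_pos_of_pos hL p) (hNlb x)
  set a : X → ℝ := fun x => N x ^ (1/p) with hadef
  have ha0 : ∀ x, 0 < a x := fun x => Real.rpow_pos_of_pos (hN0 x) _
  have haL : ∀ x, L ≤ a x := by
    intro x
    have hLc : (L ^ p) ^ (1/p) = L := by
      rw [← Real.rpow_mul hL.le, mul_one_div, div_self hp0', Real.rpow_one]
    calc L = (L ^ p) ^ (1/p) := hLc.symm
      _ ≤ a x := Real.rpow_le_rpow (Real.rpow_nonneg hL.le p) (hNlb x) h1p.le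
  have hap : ∀ x, a x ^ p = N x := fun x => hcancel (N x) (hN0 x).le
  -- finite version of each member
  set Mf : Set X → Finset X := fun U => if h : U.Finite then h.toFinset else ∅ with hMfdef
  have hMfmem : ∀ U ∈ 𝔘, ∀ z : X, z ∈ Mf U ↔ z ∈ U := by
    intro U hU z
    rw [hMfdef]
    simp [dif_pos (hUfin U hU), Set.Finite.mem_toFinset]
  -- normalization of the member weights
  set M : Set X → ℝ := fun U => ∑ z ∈ Mf U, ψ U z ^ p with hMdef
  have hM0 : ∀ U, 0 ≤ M U := fun U => Finset.sum_nonneg (fun z _ => Real.rpow_nonneg (hψ0 U z) p)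
  have hMpos : ∀ U ∈ 𝔘, ∀ w ∈ U, 0 < M U := by
    intro U hU w hw
    calc (0:ℝ) < ψ U w ^ p := Real.rpow_pos_of_pos (hψpos U w hw) p
      _ ≤ M U := Finset.single_le_sum (fun z _ => Real.rpow_nonneg (hψ0 U z) p)
          ((hMfmem U hU w).2 hw)
  set χ : Set X → X → ℝ := fun U z => ψ U z / M U ^ (1/p) with hχdef
  have hχ0 : ∀ U z, 0 ≤ χ U z := fun U z => div_nonneg (hψ0 U z) (Real.rpow_nonneg (hM0 U) _)
  have hχmem : ∀ U (z : X), χ U z ≠ 0 → z ∈ U := by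
    intro U z h
    refine hψmem U z (fun h0 => h ?_)
    rw [hχdef]; simp [h0]
  have hχsum : ∀ U ∈ 𝔘, ∀ w ∈ U, ∀ T : Finset X, Mf U ⊆ T →
      ∑ z ∈ T, χ U z ^ p = 1 := by
    intro U hU w hw T hsub
    have h1 : ∑ z ∈ T, χ U z ^ p = ∑ z ∈ Mf U, χ U z ^ p := by
      refine (Finset.sum_subset hsub (fun z hzT hzM => ?_)).symm
      have hz : z ∉ U := fun hzU => hzM ((hMfmem U hU z).2 hzU)
      rw [hχdef]
      simp [hψzero U z hz, Real.zero_rpow hp0']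
    rw [h1, hχdef]
    have hMp : 0 < M U := hMpos U hU w hw
    simp only
    have : ∀ z ∈ Mf U, (ψ U z / M U ^ (1/p)) ^ p = ψ U z ^ p / M U := by
      intro z _
      rw [Real.div_rpow (hψ0 U z) (Real.rpow_nonneg hMp.le _), hcancel (M U) hMp.le]
    rw [Finset.sum_congr rfl this, ← Finset.sum_div]
    have hMeq : (∑ z ∈ Mf U, ψ U z ^ p) = M U := rfl
    rw [hMeq, div_self (ne_of_gt hMp)]
  -- the kernel
  set φ : Set X → X → ℝ := fun U x => ψ U x / a x with hφdef
  have hφ0 : ∀ U x, 0 ≤ φ U x := fun U x => div_nonneg (hψ0 U x) (ha0 x).le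
  have hφzero : ∀ U (x : X), x ∉ U → φ U x = 0 := by
    intro U x h
    rw [hφdef]; simp [hψzero U x h]
  have hφsum : ∀ (x : X) (G : Finset (Set X)), Φ x ⊆ G → (∀ U ∈ G, U ∈ 𝔘) →
      ∑ U ∈ G, φ U x ^ p = 1 := by
    intro x G hsub hG
    rw [hφdef]
    simp only
    have : ∀ U ∈ G, (ψ U x / a x) ^ p = ψ U x ^ p / N x := by
      intro U _
      rw [Real.div_rpow (hψ0 U x) (ha0 x).le, hap x]
    rw [Finset.sum_congr rfl this, ← Finset.sum_div, hNext x G hsub hG,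
      div_self (ne_of_gt (hN0 x))]
  set ξ : X → X → ℝ := fun x z => (∑ U ∈ Φ x, (φ U x * χ U z) ^ p) ^ (1/p) with hξdef
  have hterm0 : ∀ U (x z : X), 0 ≤ (φ U x * χ U z) ^ p :=
    fun U x z => Real.rpow_nonneg (mul_nonneg (hφ0 U x) (hχ0 U z)) p
  have hξ0 : ∀ x z, 0 ≤ ξ x z :=
    fun x z => Real.rpow_nonneg (Finset.sum_nonneg (fun U _ => hterm0 U x z)) _
  have hξalt : ∀ (x z : X) (G : Finset (Set X)), Φ x ⊆ G → (∀ U ∈ G, U ∈ 𝔘) →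
      ξ x z = (∑ U ∈ G, (φ U x * χ U z) ^ p) ^ (1/p) := by
    intro x z G hsub hG
    rw [hξdef]
    simp only
    congr 1
    refine Finset.sum_subset hsub (fun U hUG hUΦ => ?_)
    have hx : x ∉ U := fun hxU => hUΦ ((hΦmem x U).2 ⟨hG U hUG, hxU⟩)
    rw [hφzero U x hx, zero_mul, Real.zero_rpow hp0']
  have hξsupp : ∀ x z : X, ξ x z ≠ 0 → ∃ U ∈ 𝔘, x ∈ U ∧ z ∈ U := by
    intro x z h
    rw [hξdef] at h
    simp only at h
    have hsum : ∑ U ∈ Φ x, (φ U x * χ U z) ^ p ≠ 0 := by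
      intro h0
      rw [h0] at h
      exact h (Real.zero_rpow (ne_of_gt h1p))
    obtain ⟨U, hUΦ, hUne⟩ : ∃ U ∈ Φ x, (φ U x * χ U z) ^ p ≠ 0 := by
      by_contra hall
      push_neg at hall
      exact hsum (Finset.sum_eq_zero hall)
    obtain ⟨hU𝔘, hxU⟩ := (hΦmem x U).1 hUΦ
    have hχne : χ U z ≠ 0 := by
      intro h0
      rw [h0, mul_zero, Real.zero_rpow hp0'] at hUne
      exact hUne rfl
    exact ⟨U, hU𝔘, hxU, hχmem U z hχne⟩
  refine ⟨ξ, ?_, ?_, ?_⟩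
  · -- norm one
    intro x
    set T : Finset X := (Φ x).biUnion Mf with hTdef
    have hTsub : ∀ U ∈ Φ x, Mf U ⊆ T := fun U hU => Finset.subset_biUnion_of_mem Mf hU
    have hzero : ∀ z : X, z ∉ T → ξ x z = 0 := by
      intro z hz
      by_contra hne
      obtain ⟨U, hU𝔘, hxU, hzU⟩ := hξsupp x z hne
      have hUΦ : U ∈ Φ x := (hΦmem x U).2 ⟨hU𝔘, hxU⟩
      exact hz (hTsub U hUΦ ((hMfmem U hU𝔘 z).2 hzU))
    rw [pNorm]
    rw [tsum_eq_sum (s := T) (fun z hz => by rw [hzero z hz]; simp [Real.zero_rpow hp0'])]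
    have hpt : ∀ z ∈ T, |ξ x z| ^ p = ∑ U ∈ Φ x, φ U x ^ p * χ U z ^ p := by
      intro z _
      rw [abs_of_nonneg (hξ0 x z), hξdef]
      simp only
      rw [hcancel _ (Finset.sum_nonneg (fun U _ => hterm0 U x z))]
      exact Finset.sum_congr rfl (fun U _ => Real.mul_rpow (hφ0 U x) (hχ0 U z))
    rw [Finset.sum_congr rfl hpt, Finset.sum_comm]
    have hin : ∀ U ∈ Φ x, ∑ z ∈ T, φ U x ^ p * χ U z ^ p = φ U x ^ p := by
      intro U hUΦ
      obtain ⟨hU𝔘, hxU⟩ := (hΦmem x U).1 hUΦ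
      rw [← Finset.mul_sum, hχsum U hU𝔘 x hxU T (hTsub U hUΦ), mul_one]
    rw [Finset.sum_congr rfl hin, hφsum x (Φ x) (Finset.Subset.refl _)
      (fun U hU => ((hΦmem x U).1 hU).1), Real.one_rpow]
  · -- propagation
    intro x z h
    obtain ⟨U, hU𝔘, hxU, hzU⟩ := hξsupp x z h
    exact hmesh U hU𝔘 x hxU z hzU
  · -- Lipschitz
    intro x y
    set G : Finset (Set X) := Φ x ∪ Φ y with hGdef
    have hGU : ∀ U ∈ G, U ∈ 𝔘 := by
      intro U hU
      rcases Finset.mem_union.1 hU with h | h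
      · exact ((hΦmem x U).1 h).1
      · exact ((hΦmem y U).1 h).1
    have hGw : ∀ U ∈ G, x ∈ U ∨ y ∈ U := by
      intro U hU
      rcases Finset.mem_union.1 hU with h | h
      · exact Or.inl ((hΦmem x U).1 h).2
      · exact Or.inr ((hΦmem y U).1 h).2
    have hGcard : (G.card : ℝ) ≤ 2 * m := by
      have h1 := Finset.card_union_le (Φ x) (Φ y)
      have h2 := hΦcard x
      have h3 := hΦcard y
      have : G.card ≤ m + m := le_trans h1 (add_le_add h2 h3)
      push_cast
      calc (G.card : ℝ) ≤ (m : ℝ) + m := by exact_mod_cast this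
        _ = 2 * m := by ring
    set T : Finset X := G.biUnion Mf with hTdef
    set d : ℝ := dist x y with hd
    have hd0 : 0 ≤ d := dist_nonneg
    -- sum of |Δψ|^p over G
    have hΨ0 : (0:ℝ) ≤ ∑ U ∈ G, |ψ U x - ψ U y| ^ p :=
      Finset.sum_nonneg fun U _ => Real.rpow_nonneg (abs_nonneg _) p
    have hΨsum : ∑ U ∈ G, |ψ U x - ψ U y| ^ p ≤ (2 * m) * d ^ p := by
      calc ∑ U ∈ G, |ψ U x - ψ U y| ^ p ≤ ∑ _U ∈ G, d ^ p :=
          Finset.sum_le_sum (fun U _ => Real.rpow_le_rpow (abs_nonneg _) (hψlip U x y) hp0.le)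
        _ = G.card * d ^ p := by rw [Finset.sum_const, nsmul_eq_mul]
        _ ≤ (2 * m) * d ^ p := mul_le_mul_of_nonneg_right hGcard (Real.rpow_nonneg hd0 p)
    have hΨsum' : (∑ U ∈ G, |ψ U x - ψ U y| ^ p) ^ (1/p) ≤ (2 * (m:ℝ)) ^ (1/p) * d := by
      calc (∑ U ∈ G, |ψ U x - ψ U y| ^ p) ^ (1/p)
          ≤ ((2 * (m:ℝ)) * d ^ p) ^ (1/p) := Real.rpow_le_rpow hΨ0 hΨsum h1p.le
        _ = (2 * (m:ℝ)) ^ (1/p) * (d ^ p) ^ (1/p) :=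
            Real.mul_rpow (by positivity) (Real.rpow_nonneg hd0 p)
        _ = (2 * (m:ℝ)) ^ (1/p) * d := by
            rw [← Real.rpow_mul hd0, mul_one_div, div_self hp0', Real.rpow_one]
    -- a as an Lp norm over G
    have haG : ∀ (w : X), Φ w ⊆ G → (∑ U ∈ G, |ψ U w| ^ p) ^ (1/p) = a w := by
      intro w hsub
      have h1 : ∀ U ∈ G, |ψ U w| ^ p = ψ U w ^ p := fun U _ => by rw [abs_of_nonneg (hψ0 U w)]
      rw [Finset.sum_congr rfl h1, hNext w G hsub hGU]
    have hΔa : |a x - a y| ≤ (2 * (m:ℝ)) ^ (1/p) * d := by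
      have h := abs_Lp_sub_le G (fun U => ψ U x) (fun U => ψ U y) hp
      rw [haG x Finset.subset_union_left, haG y Finset.subset_union_right] at h
      exact h.trans hΨsum'
    -- pointwise bound
    have hpt : ∀ z : X, |ξ x z - ξ y z| ^ p ≤ ∑ U ∈ G, |φ U x - φ U y| ^ p * χ U z ^ p := by
      intro z
      have hx' : ξ x z = (∑ U ∈ G, |φ U x * χ U z| ^ p) ^ (1/p) := by
        rw [hξalt x z G Finset.subset_union_left hGU]
        congr 1
        exact Finset.sum_congr rfl fun U _ => by
          rw [abs_of_nonneg (mul_nonneg (hφ0 U x) (hχ0 U z))]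
      have hy' : ξ y z = (∑ U ∈ G, |φ U y * χ U z| ^ p) ^ (1/p) := by
        rw [hξalt y z G Finset.subset_union_right hGU]
        congr 1
        exact Finset.sum_congr rfl fun U _ => by
          rw [abs_of_nonneg (mul_nonneg (hφ0 U y) (hχ0 U z))]
      have h := abs_Lp_sub_le G (fun U => φ U x * χ U z) (fun U => φ U y * χ U z) hp
      rw [← hx', ← hy'] at h
      have h2 : |ξ x z - ξ y z| ^ p ≤
          ((∑ U ∈ G, |φ U x * χ U z - φ U y * χ U z| ^ p) ^ (1/p)) ^ p :=
        Real.rpow_le_rpow (abs_nonneg _) h hp0.le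
      rw [hcancel _ (Finset.sum_nonneg fun U _ => Real.rpow_nonneg (abs_nonneg _) p)] at h2
      refine h2.trans (le_of_eq (Finset.sum_congr rfl fun U _ => ?_))
      rw [← sub_mul, abs_mul, abs_of_nonneg (hχ0 U z),
        Real.mul_rpow (abs_nonneg _) (hχ0 U z)]
    -- support
    have hzero : ∀ z ∉ T, |ξ x z - ξ y z| ^ p = 0 := by
      intro z hz
      have hx0 : ξ x z = 0 := by
        by_contra h
        obtain ⟨U, hU, hxU, hzU⟩ := hξsupp x z h
        exact hz (Finset.mem_biUnion.2 ⟨U, Finset.mem_union_left _ ((hΦmem x U).2 ⟨hU, hxU⟩),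
          (hMfmem U hU z).2 hzU⟩)
      have hy0 : ξ y z = 0 := by
        by_contra h
        obtain ⟨U, hU, hyU, hzU⟩ := hξsupp y z h
        exact hz (Finset.mem_biUnion.2 ⟨U, Finset.mem_union_right _ ((hΦmem y U).2 ⟨hU, hyU⟩),
          (hMfmem U hU z).2 hzU⟩)
      rw [hx0, hy0, sub_zero, abs_zero, Real.zero_rpow hp0']
    -- the sum bound
    have hA : ∑ z ∈ T, |ξ x z - ξ y z| ^ p ≤ ∑ U ∈ G, |φ U x - φ U y| ^ p := by
      calc ∑ z ∈ T, |ξ x z - ξ y z| ^ p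
          ≤ ∑ z ∈ T, ∑ U ∈ G, |φ U x - φ U y| ^ p * χ U z ^ p :=
            Finset.sum_le_sum (fun z _ => hpt z)
        _ = ∑ U ∈ G, |φ U x - φ U y| ^ p * ∑ z ∈ T, χ U z ^ p := by
            rw [Finset.sum_comm]
            exact Finset.sum_congr rfl fun U _ => (Finset.mul_sum _ _ _).symm
        _ = ∑ U ∈ G, |φ U x - φ U y| ^ p := by
            refine Finset.sum_congr rfl fun U hU => ?_
            obtain ⟨w, hw⟩ : ∃ w, w ∈ U := by
              rcases hGw U hU with h | h
              · exact ⟨x, h⟩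
              · exact ⟨y, h⟩
            rw [hχsum U (hGU U hU) w hw T (Finset.subset_biUnion_of_mem Mf hU), mul_one]
    -- key decomposition
    have hkey : ∀ U : Set X, |φ U x - φ U y| ≤
        |ψ U x - ψ U y| / a x + ψ U y * (|a x - a y| / (a x * a y)) := by
      intro U
      have hdecomp : φ U x - φ U y =
          (ψ U x - ψ U y) / a x + ψ U y * ((a y - a x) / (a x * a y)) := by
        rw [hφdef]
        field_simp [(ha0 x).ne', (ha0 y).ne']
        ring
      rw [hdecomp]
      refine (abs_add_le _ _).trans (le_of_eq ?_)
      rw [abs_div, abs_of_pos (ha0 x), abs_mul, abs_of_nonneg (hψ0 U y), abs_div,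
        abs_of_pos (mul_pos (ha0 x) (ha0 y)), abs_sub_comm (a y) (a x)]
    set f : Set X → ℝ := fun U => |ψ U x - ψ U y| / a x with hfdef
    set g : Set X → ℝ := fun U => ψ U y * (|a x - a y| / (a x * a y)) with hgdef
    have hf0 : ∀ U, 0 ≤ f U := fun U => div_nonneg (abs_nonneg _) (ha0 x).le
    have hg0 : ∀ U, 0 ≤ g U := fun U => mul_nonneg (hψ0 U y)
      (div_nonneg (abs_nonneg _) (mul_pos (ha0 x) (ha0 y)).le)
    have hB0 : (0:ℝ) ≤ ∑ U ∈ G, |φ U x - φ U y| ^ p :=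
      Finset.sum_nonneg fun U _ => Real.rpow_nonneg (abs_nonneg _) p
    have hBfg : ∑ U ∈ G, |φ U x - φ U y| ^ p ≤ ∑ U ∈ G, |f U + g U| ^ p :=
      Finset.sum_le_sum fun U _ => Real.rpow_le_rpow (abs_nonneg _)
        ((hkey U).trans (le_abs_self _)) hp0.le
    have hMink := Real.Lp_add_le G f g hp
    have hfp : (∑ U ∈ G, |f U| ^ p) ^ (1/p)
        = (∑ U ∈ G, |ψ U x - ψ U y| ^ p) ^ (1/p) / a x := by
      have h1 : ∀ U ∈ G, |f U| ^ p = |ψ U x - ψ U y| ^ p / N x := by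
        intro U _
        rw [hfdef]
        simp only
        rw [abs_of_nonneg (hf0 U), hfdef]
        simp only
        rw [Real.div_rpow (abs_nonneg _) (ha0 x).le, hap x]
      rw [Finset.sum_congr rfl h1, ← Finset.sum_div,
        Real.div_rpow hΨ0 (hN0 x).le]
    have hgp : (∑ U ∈ G, |g U| ^ p) ^ (1/p) = |a x - a y| / a x := by
      set c : ℝ := |a x - a y| / (a x * a y) with hcdef
      have hc0 : 0 ≤ c := div_nonneg (abs_nonneg _) (mul_pos (ha0 x) (ha0 y)).le
      have h1 : ∀ U ∈ G, |g U| ^ p = ψ U y ^ p * c ^ p := by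
        intro U _
        rw [hgdef]
        simp only
        rw [abs_of_nonneg (hg0 U), hgdef]
        simp only
        rw [Real.mul_rpow (hψ0 U y) hc0]
      have h2 : ∑ U ∈ G, ψ U y ^ p * c ^ p = N y * c ^ p := by
        rw [← Finset.sum_mul, hNext y G Finset.subset_union_right hGU]
      rw [Finset.sum_congr rfl h1, h2,
        Real.mul_rpow (hN0 y).le (Real.rpow_nonneg hc0 p),
        ← Real.rpow_mul hc0, mul_one_div, div_self hp0', Real.rpow_one]
      have hay : N y ^ (1/p) = a y := rfl
      rw [hay, hcdef]
      field_simp [(ha0 x).ne', (ha0 y).ne']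
    have hB : (∑ U ∈ G, |φ U x - φ U y| ^ p) ^ (1/p)
        ≤ 2 * (2 * (m:ℝ)) ^ (1/p) * d / L := by
      calc (∑ U ∈ G, |φ U x - φ U y| ^ p) ^ (1/p)
          ≤ (∑ U ∈ G, |f U + g U| ^ p) ^ (1/p) := Real.rpow_le_rpow hB0 hBfg h1p.le
        _ ≤ (∑ U ∈ G, |f U| ^ p) ^ (1/p) + (∑ U ∈ G, |g U| ^ p) ^ (1/p) := hMink
        _ = (∑ U ∈ G, |ψ U x - ψ U y| ^ p) ^ (1/p) / a x + |a x - a y| / a x := by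
            rw [hfp, hgp]
        _ ≤ ((2 * (m:ℝ)) ^ (1/p) * d) / L + ((2 * (m:ℝ)) ^ (1/p) * d) / L := by
            have hnn : (0:ℝ) ≤ (2 * (m:ℝ)) ^ (1/p) * d :=
              mul_nonneg (Real.rpow_nonneg (by positivity) _) hd0
            exact add_le_add (div_le_div₀ hnn hΨsum' hL (haL x))
              (div_le_div₀ hnn hΔa hL (haL x))
        _ = 2 * (2 * (m:ℝ)) ^ (1/p) * d / L := by ring
    -- conclude
    have hm1 : (1:ℝ) ≤ m := by
      have hx : x ∈ ⋃₀ 𝔘 := by rw [hcover]; trivial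
      obtain ⟨U, hU, hxU⟩ := hx
      have hne : {V | V ∈ 𝔘 ∧ x ∈ V}.Nonempty := ⟨U, hU, hxU⟩
      have h1 : (1:ℕ∞) ≤ {V | V ∈ 𝔘 ∧ x ∈ V}.encard := Set.one_le_encard_iff_nonempty.2 hne
      have h2 : (1:ℕ∞) ≤ (m:ℕ∞) := le_trans h1 (hm x)
      exact_mod_cast h2
    have hmono : (2 * (m:ℝ)) ^ (1/p) ≤ (2 * (m:ℝ) ^ 2) ^ (1/p) :=
      Real.rpow_le_rpow (by positivity) (by nlinarith) h1p.le
    rw [pNorm, tsum_eq_sum (s := T) hzero]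
    calc (∑ z ∈ T, |ξ x z - ξ y z| ^ p) ^ (1/p)
        ≤ (∑ U ∈ G, |φ U x - φ U y| ^ p) ^ (1/p) :=
          Real.rpow_le_rpow (Finset.sum_nonneg fun z _ =>
            Real.rpow_nonneg (abs_nonneg _) p) hA h1p.le
      _ ≤ 2 * (2 * (m:ℝ)) ^ (1/p) * d / L := hB
      _ ≤ 2 * (2 * (m:ℝ) ^ 2) ^ (1/p) * d / L := by gcongr
      _ = (2 * (2 * (m:ℝ) ^ 2) ^ (1/p) / L) * d := by ring
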